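/- arXiv:2505.20372 — 2 statements merged into one kernel-verified Lean document; each statement's English description precedes it below -/
import Mathlib

section
/- Let ρ : [0,1] × [0,∞) → (0,∞) be continuous, C¹, and satisfy ρ_θ(κ,θ) + g(κ,θ)·min{ν_min(κ) ρ_κ(κ,θ), ν_max(κ) ρ_κ(κ,θ)} = f(κ,θ) ρ(κ,θ) with g > 0, where ν_min(κ) ≤ 0 ≤ ν_max(κ). Then for every admissible ν (measurable with ν_min(κ) ≤ ν(κ,θ) ≤ ν_max(κ)) and every solution (r, κ) of r′ = f(κ,θ) r, κ′ = g(κ,θ) ν(κ,θ) with κ(θ) ∈ [0,1] and r(0) > 0, one has r(θ) ≤ ρ(κ(θ), θ) · r(0) / ρ(κ(0), 0) for all θ ≥ 0. -/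
open Real Set

theorem stmt_6 (f g : ℝ → ℝ → ℝ) (νmin νmax : ℝ → ℝ)
    (hfcont : Continuous fun p : ℝ × ℝ => f p.1 p.2)
    (hgcont : Continuous fun p : ℝ × ℝ => g p.1 p.2)
    (hgpos : ∀ κ ∈ Icc (0:ℝ) 1, ∀ θ : ℝ, 0 ≤ θ → 0 < g κ θ)
    (hνsign : ∀ κ ∈ Icc (0:ℝ) 1, νmin κ ≤ 0 ∧ 0 ≤ νmax κ)
    (ρ ρκ ρθ : ℝ → ℝ → ℝ)
    (hρC1 : ∀ κ θ : ℝ, HasFDerivAt (fun p : ℝ × ℝ => ρ p.1 p.2)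
      (ρκ κ θ • ContinuousLinearMap.fst ℝ ℝ ℝ + ρθ κ θ • ContinuousLinearMap.snd ℝ ℝ ℝ)
      (κ, θ))
    (hρκcont : Continuous fun p : ℝ × ℝ => ρκ p.1 p.2)
    (hρθcont : Continuous fun p : ℝ × ℝ => ρθ p.1 p.2)
    (hρpos : ∀ κ ∈ Icc (0:ℝ) 1, ∀ θ : ℝ, 0 ≤ θ → 0 < ρ κ θ)
    -- the HJB equation
    (hHJB : ∀ κ ∈ Icc (0:ℝ) 1, ∀ θ : ℝ, 0 ≤ θ →
      ρθ κ θ + g κ θ * min (νmin κ * ρκ κ θ) (νmax κ * ρκ κ θ) = f κ θ * ρ κ θ)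
    -- an admissible solution
    (r κ ν : ℝ → ℝ) (hνmeas : Measurable ν)
    (hνadm : ∀ θ : ℝ, 0 ≤ θ → νmin (κ θ) ≤ ν θ ∧ ν θ ≤ νmax (κ θ))
    (hκrange : ∀ θ : ℝ, 0 ≤ θ → κ θ ∈ Icc (0:ℝ) 1)
    (hr : ∀ θ : ℝ, 0 ≤ θ → HasDerivAt r (f (κ θ) θ * r θ) θ)
    (hκ' : ∀ θ : ℝ, 0 ≤ θ → HasDerivAt κ (g (κ θ) θ * ν θ) θ)
    (hr0 : 0 < r 0) :
    ∀ θ : ℝ, 0 ≤ θ → r θ ≤ ρ (κ θ) θ * r 0 / ρ (κ 0) 0 := by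
  have hκcont : ∀ θ : ℝ, 0 ≤ θ → ContinuousAt κ θ := fun θ hθ => (hκ' θ hθ).continuousAt
  -- extended coefficient
  set b : ℝ → ℝ := fun θ => f (κ (max θ 0)) (max θ 0) with hbdef
  have hκm : Continuous fun θ : ℝ => κ (max θ 0) := by
    rw [continuous_iff_continuousAt]
    intro θ
    have hmax : ContinuousAt (fun t : ℝ => max t 0) θ :=
      (continuous_id.max continuous_const).continuousAt
    exact ContinuousAt.comp (hκcont _ (le_max_right θ 0)) hmax
  have hbcont : Continuous b := by
    exact hfcont.comp (hκm.prodMk (continuous_id.max continuous_const))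
  have hbeq : ∀ θ : ℝ, 0 ≤ θ → b θ = f (κ θ) θ := by
    intro θ hθ
    simp [hbdef, max_eq_left hθ]
  set A : ℝ → ℝ := fun t => ∫ s in (0:ℝ)..t, b s with hAdef
  have hA : ∀ θ : ℝ, HasDerivAt A (b θ) θ := by
    intro θ
    exact intervalIntegral.integral_hasDerivAt_right (hbcont.intervalIntegrable 0 θ)
      (hbcont.stronglyMeasurable.stronglyMeasurableAtFilter) hbcont.continuousAt
  set u : ℝ → ℝ := fun θ => r θ * Real.exp (-(A θ)) with hudef
  have hu : ∀ θ : ℝ, 0 ≤ θ → HasDerivAt u 0 θ := by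
    intro θ hθ
    have h1 := (hr θ hθ).mul (((hA θ).neg).exp)
    refine h1.congr_deriv ?_
    rw [hbeq θ hθ]; ring
  have hucont : ContinuousOn u (Ici 0) := fun x hx => (hu x hx).continuousAt.continuousWithinAt
  have hudiff : DifferentiableOn ℝ u (interior (Ici (0:ℝ))) := by
    rw [interior_Ici]
    exact fun x hx => ((hu x (le_of_lt hx)).differentiableAt).differentiableWithinAt
  have huderiv : ∀ x ∈ interior (Ici (0:ℝ)), deriv u x = 0 := by
    rw [interior_Ici]
    exact fun x hx => (hu x (le_of_lt hx)).deriv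
  have huconst : ∀ θ : ℝ, 0 ≤ θ → u θ = u 0 := by
    intro θ hθ
    have hm : MonotoneOn u (Ici 0) :=
      monotoneOn_of_deriv_nonneg (convex_Ici 0) hucont hudiff
        (fun x hx => le_of_eq (huderiv x hx).symm)
    have ha : AntitoneOn u (Ici 0) :=
      antitoneOn_of_deriv_nonpos (convex_Ici 0) hucont hudiff
        (fun x hx => le_of_eq (huderiv x hx))
    exact le_antisymm (ha (self_mem_Ici) hθ hθ) (hm (self_mem_Ici) hθ hθ)
  have hA0 : A 0 = 0 := intervalIntegral.integral_same
  have hrpos : ∀ θ : ℝ, 0 ≤ θ → 0 < r θ := by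
    intro θ hθ
    have h1 := huconst θ hθ
    simp only [hudef, hA0, neg_zero, Real.exp_zero, mul_one] at h1
    nlinarith [Real.exp_pos (-(A θ))]
  -- the function h = r / ρ(κ·,·)
  set P : ℝ → ℝ := fun θ => ρ (κ θ) θ with hPdef
  have hPpos : ∀ θ : ℝ, 0 ≤ θ → 0 < P θ := fun θ hθ => hρpos _ (hκrange θ hθ) θ hθ
  have hP : ∀ θ : ℝ, 0 ≤ θ →
      HasDerivAt P (ρκ (κ θ) θ * (g (κ θ) θ * ν θ) + ρθ (κ θ) θ) θ := by
    intro θ hθ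
    have hinner : HasDerivAt (fun t : ℝ => (κ t, t)) (g (κ θ) θ * ν θ, 1) θ :=
      (hκ' θ hθ).prodMk (hasDerivAt_id θ)
    have hcomp : HasDerivAt (fun t : ℝ => ρ (κ t) t)
        ((ρκ (κ θ) θ • ContinuousLinearMap.fst ℝ ℝ ℝ +
          ρθ (κ θ) θ • ContinuousLinearMap.snd ℝ ℝ ℝ) (g (κ θ) θ * ν θ, 1)) θ :=
      (hρC1 (κ θ) θ).comp_hasDerivAt_of_eq θ hinner rfl
    simpa [ContinuousLinearMap.add_apply, ContinuousLinearMap.smul_apply,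
      smul_eq_mul] using hcomp
  set h : ℝ → ℝ := fun θ => r θ / P θ with hhdef
  have hh : ∀ θ : ℝ, 0 ≤ θ → HasDerivAt h
      ((f (κ θ) θ * r θ * P θ - r θ * (ρκ (κ θ) θ * (g (κ θ) θ * ν θ) + ρθ (κ θ) θ)) / (P θ)^2) θ :=
    fun θ hθ => (hr θ hθ).div (hP θ hθ) (ne_of_gt (hPpos θ hθ))
  have hderiv_nonpos : ∀ θ : ℝ, 0 ≤ θ →
      (f (κ θ) θ * r θ * P θ - r θ * (ρκ (κ θ) θ * (g (κ θ) θ * ν θ) + ρθ (κ θ) θ)) / (P θ)^2 ≤ 0 := by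
    intro θ hθ
    apply div_nonpos_of_nonpos_of_nonneg _ (sq_nonneg _)
    have hHJBθ := hHJB (κ θ) (hκrange θ hθ) θ hθ
    have hmin : min (νmin (κ θ) * ρκ (κ θ) θ) (νmax (κ θ) * ρκ (κ θ) θ) ≤ ν θ * ρκ (κ θ) θ := by
      rcases le_total 0 (ρκ (κ θ) θ) with hc | hc
      · exact le_trans (min_le_left _ _) (mul_le_mul_of_nonneg_right (hνadm θ hθ).1 hc)
      · exact le_trans (min_le_right _ _) (mul_le_mul_of_nonpos_right (hνadm θ hθ).2 hc)
    have hgθ := hgpos (κ θ) (hκrange θ hθ) θ hθ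
    have hrθ := hrpos θ hθ
    nlinarith [mul_le_mul_of_nonneg_left hmin (le_of_lt hgθ)]
  have hhant : AntitoneOn h (Ici (0:ℝ)) := by
    apply antitoneOn_of_deriv_nonpos (convex_Ici 0)
      (fun x hx => (hh x hx).continuousAt.continuousWithinAt)
    · rw [interior_Ici]
      exact fun x hx => ((hh x (le_of_lt hx)).differentiableAt).differentiableWithinAt
    · rw [interior_Ici]
      intro x hx
      rw [(hh x (le_of_lt hx)).deriv]
      exact hderiv_nonpos x (le_of_lt hx)
  intro θ hθ
  have := hhant self_mem_Ici hθ hθ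
  have hP0 : 0 < P 0 := hPpos 0 le_rfl
  have hPθ : 0 < P θ := hPpos θ hθ
  rw [hhdef] at this
  simp only at this
  rw [div_le_div_iff₀ hPθ hP0] at this
  rw [le_div_iff₀ hP0]
  nlinarith
end

section
/- For k > 0 and m_min = 1, m_max = 4, if k > √m_max − √m_min = 1, then for every constant m ∈ [1,4], the matrix M(m) = [[−k/m, −1/m],[1, 0]] is Hurwitz (all eigenvalues have negative real part), and moreover there exists a single positive definite symmetric 2×2 matrix P such that M(m)ᵀP + P M(m) is negative definite for all m ∈ [1,4]. -/
open Real Set Matrix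

lemma posdef_2x2 {a b d : ℝ} (ha : 0 < a) (hdet : 0 < a * d - b ^ 2) :
    (!![a, b; b, d]).PosDef := by
  rw [Matrix.posDef_iff_dotProduct_mulVec]
  constructor
  · ext i j
    fin_cases i <;> fin_cases j <;> simp [Matrix.conjTranspose_apply]
  · intro x hx
    have hx' : x 0 ≠ 0 ∨ x 1 ≠ 0 := by
      by_contra h
      push_neg at h
      exact hx (funext fun i => by fin_cases i <;> simp [h.1, h.2])
    have e00 : !![a,b;b,d] 0 0 = a := rfl
    have e01 : !![a,b;b,d] 0 1 = b := rfl
    have e10 : !![a,b;b,d] 1 0 = b := rfl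
    have e11 : !![a,b;b,d] 1 1 = d := rfl
    simp only [star_trivial, dotProduct, Matrix.mulVec, Fin.sum_univ_two,
      e00, e01, e10, e11]
    rcases hx' with h | h
    · rcases eq_or_ne (x 1) 0 with h1 | h1
      · simp [h1]; nlinarith [sq_pos_of_ne_zero h]
      · nlinarith [sq_nonneg (a * x 0 + b * x 1), sq_pos_of_ne_zero h1,
          mul_pos ha (sq_pos_of_ne_zero h1)]
    · nlinarith [sq_nonneg (a * x 0 + b * x 1), sq_pos_of_ne_zero h,
        mul_pos ha (sq_pos_of_ne_zero h)]

/-- The matrix `M(m) = [[−k/m, −1/m], [1, 0]]`. -/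
noncomputable def Mmat (k m : ℝ) : Matrix (Fin 2) (Fin 2) ℝ :=
  !![-(k / m), -(1 / m); 1, 0]

theorem stmt_11 (k : ℝ) (hk : 0 < k)
    (hcond : k > Real.sqrt 4 - Real.sqrt 1) :
    (∀ m ∈ Icc (1:ℝ) 4, ∀ z : ℂ,
      Module.End.HasEigenvalue
        (Matrix.toLin' ((Mmat k m).map (Complex.ofReal : ℝ → ℂ))) z → z.re < 0) ∧
    (∃ P : Matrix (Fin 2) (Fin 2) ℝ, P.IsSymm ∧ P.PosDef ∧
      ∀ m ∈ Icc (1:ℝ) 4, (-((Mmat k m)ᵀ * P + P * Mmat k m)).PosDef) := by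
  have hk1 : 1 < k := by
    have h4 : Real.sqrt 4 = 2 := by
      rw [show (4:ℝ) = 2 ^ 2 by norm_num]
      exact Real.sqrt_sq (by norm_num)
    have h1 : Real.sqrt 1 = 1 := Real.sqrt_one
    rw [h4, h1] at hcond
    linarith
  have hk0 : k ≠ 0 := ne_of_gt hk
  constructor
  · -- eigenvalue part
    intro m hm z hz
    have hm0 : (0:ℝ) < m := lt_of_lt_of_le one_pos hm.1
    obtain ⟨v, hv⟩ := hz.exists_hasEigenvector
    have hv1 : Matrix.toLin' ((Mmat k m).map (Complex.ofReal : ℝ → ℂ)) v = z • v :=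
      hv.apply_eq_smul
    rw [Matrix.toLin'_apply] at hv1
    have h0 := congrFun hv1 0
    have h1 := congrFun hv1 1
    simp only [Mmat, Matrix.mulVec, dotProduct, Fin.sum_univ_two, Matrix.map_apply,
      Matrix.cons_val', Matrix.cons_val_zero, Matrix.cons_val_one, Matrix.head_cons,
      Matrix.empty_val', Matrix.cons_val_fin_one, Matrix.head_fin_const, Pi.smul_apply,
      smul_eq_mul, Complex.ofReal_neg, Complex.ofReal_one, Complex.ofReal_zero,
      Matrix.of_apply] at h0 h1
    have h1' : v 0 = z * v 1 := by linear_combination h1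
    have hv1ne : v 1 ≠ 0 := by
      intro h
      apply hv.2
      funext i
      fin_cases i
      · simpa [h] using h1'
      · exact h
    have hkey : (z * z + ↑(k / m) * z + ↑(1 / m)) * v 1 = 0 := by
      rw [h1'] at h0
      linear_combination -h0
    have hz2 : z * z + ↑(k / m) * z + ↑(1 / m) = 0 :=
      (mul_eq_zero.mp hkey).resolve_right hv1ne
    have hre := congrArg Complex.re hz2
    have him := congrArg Complex.im hz2
    simp only [Complex.add_re, Complex.mul_re, Complex.mul_im, Complex.add_im,
      Complex.ofReal_re, Complex.ofReal_im, Complex.zero_re, Complex.zero_im] at hre him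
    have hc : 0 < k / m := div_pos hk hm0
    have hd : 0 < 1 / m := by positivity
    by_cases hb : z.im = 0
    · rw [hb] at hre
      nlinarith [sq_nonneg z.re]
    · have h2 : z.im * (2 * z.re + k / m) = 0 := by linear_combination him
      have h3 : 2 * z.re + k / m = 0 := (mul_eq_zero.mp h2).resolve_left hb
      linarith
  · -- common Lyapunov matrix
    refine ⟨!![2 + 1 / (2 * k ^ 2), 1 / (2 * k); 1 / (2 * k), 1], ?_, ?_, ?_⟩
    · ext i j
      fin_cases i <;> fin_cases j <;> simp [Matrix.transpose_apply]
    · apply posdef_2x2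
      · positivity
      · have : (2 + 1 / (2 * k ^ 2)) * 1 - (1 / (2 * k)) ^ 2 = 2 + 1 / (4 * k ^ 2) := by
          field_simp
          ring
        rw [this]
        positivity
    · intro m hm
      have hm1 : (1:ℝ) ≤ m := hm.1
      have hm4 : m ≤ 4 := hm.2
      have hm0 : (0:ℝ) < m := lt_of_lt_of_le one_pos hm1
      have hm0' : m ≠ 0 := ne_of_gt hm0
      have heq : -((Mmat k m)ᵀ * !![2 + 1 / (2 * k ^ 2), 1 / (2 * k); 1 / (2 * k), 1] +
          !![2 + 1 / (2 * k ^ 2), 1 / (2 * k); 1 / (2 * k), 1] * Mmat k m) =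
          !![(4 * k ^ 2 + 1 - m) / (m * k),
             ((2 + 1 / (2 * k ^ 2)) + 1 / 2 - m) / m;
             ((2 + 1 / (2 * k ^ 2)) + 1 / 2 - m) / m,
             1 / (k * m)] := by
        ext i j
        fin_cases i <;> fin_cases j <;>
          simp [Mmat, Matrix.mul_apply, Fin.sum_univ_two, Matrix.transpose_apply, Matrix.vecHead, Matrix.vecTail] <;>
          field_simp <;> ring
      rw [heq]
      apply posdef_2x2
      · apply div_pos
        · nlinarith
        · positivity
      · have hval : (4 * k ^ 2 + 1 - m) / (m * k) * (1 / (k * m)) -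
            (((2 + 1 / (2 * k ^ 2)) + 1 / 2 - m) / m) ^ 2 =
            (4 * k ^ 4 * (m - 1) * (4 - m) + (k ^ 2 - 1) * (7 * k ^ 2 + 1)) /
              (4 * k ^ 4 * m ^ 2) := by
          field_simp
          ring
        rw [hval]
        apply div_pos
        · nlinarith [mul_nonneg (sub_nonneg.mpr hm1) (sub_nonneg.mpr hm4),
            mul_pos (show (0:ℝ) < k ^ 2 - 1 by nlinarith) (show (0:ℝ) < 7 * k ^ 2 + 1 by positivity),
            pow_pos hk 4]
        · positivity
end
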